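/- Let G be a finite group of order n ≥ 2 and A a finite set of size q ≥ 2. Say a G-equivariant transformation τ : A^G → A^G admits memory set S ⊆ G if there exists μ : (S → A) → A with (τ x)(g) = μ(fun s => x(s·g)) for all x ∈ A^G, g ∈ G. If T is a set of G-equivariant transformations of A^G that generates, as a monoid under composition, the monoid of all G-equivariant transformations of A^G, then there exists τ ∈ T which does not admit any proper subset S ⊊ G as a memory set (i.e. whose minimal memory set is G itself). -/

import Mathlib

variable {G A : Type*}

/-- The right shift action of `G` on configurations `A^G`: `(x · g) h = x (h * g⁻¹)`. -/
def shift [Group G] (x : G → A) (g : G) : G → A := fun h => x (h * g⁻¹)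

/-- A transformation of the configuration space is `G`-equivariant if it commutes
with the shift action. -/
def equivariant [Group G] (τ : (G → A) → (G → A)) : Prop :=
  ∀ (x : G → A) (g : G), τ (shift x g) = shift (τ x) g

/-- The `G`-orbit of a configuration. -/
def orbit [Group G] (x : G → A) : Set (G → A) := Set.range (shift x)

/-- The stabilizer of a configuration, as a subgroup of `G`. -/
def stab [Group G] (x : G → A) : Subgroup G where
  carrier := {g : G | shift x g = x}
  one_mem' := by
    show shift x 1 = x
    funext h
    simp [shift]
  mul_mem' := by
    intro a b ha hb
    have ha' : shift x a = x := ha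
    have hb' : shift x b = x := hb
    show shift x (a * b) = x
    funext h
    show x (h * (a * b)⁻¹) = x h
    have key : h * (a * b)⁻¹ = h * b⁻¹ * a⁻¹ := by group
    rw [key]
    have h1 := congrFun ha' (h * b⁻¹)
    have h2 := congrFun hb' h
    simp only [shift] at h1 h2
    rw [h1, h2]
  inv_mem' := by
    intro a ha
    have ha' : shift x a = x := ha
    show shift x a⁻¹ = x
    funext h
    show x (h * a⁻¹⁻¹) = x h
    rw [inv_inv]
    have h1 := congrFun ha' (h * a)
    simp only [shift] at h1
    rw [mul_inv_cancel_right] at h1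
    exact h1.symm

/-- Two subgroups `H`, `K` of `G` are conjugate, namely `K = g⁻¹ * H * g` for some `g ∈ G`. -/
def conjSub [Group G] (H K : Subgroup G) : Prop :=
  ∃ g : G, ∀ a : G, a ∈ K ↔ g * a * g⁻¹ ∈ H

/-- `τ` admits `S ⊆ G` as a memory set if there is a local function `μ : A^S → A`
with `(τ x) g = μ (fun s => x (s * g))`. -/
def admitsMemorySet [Group G] (τ : (G → A) → (G → A)) (S : Set G) : Prop :=
  ∃ μ : (S → A) → A, ∀ (x : G → A) (g : G), τ x g = μ (fun s => x (s.val * g))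

section FullMemoryHelpers

attribute [local instance] Classical.propDecidable

variable [Group G]

/-- Composition of shifts. -/
lemma shift_shift_mul (x : G → A) (g h : G) : shift (shift x g) h = shift x (g * h) := by
  funext k
  show x (k * h⁻¹ * g⁻¹) = x (k * (g * h)⁻¹)
  rw [mul_inv_rev, mul_assoc]

lemma shift_one' (x : G → A) : shift x 1 = x := by
  funext k
  show x (k * 1⁻¹) = x k
  rw [inv_one, mul_one]

lemma shift_const' (a : A) (g : G) : shift (fun _ : G => a) g = fun _ => a := rfl

/-- A configuration fixed by all shifts is constant. -/
lemma isConst_of_shift_fixed (x : G → A) (h : ∀ g, shift x g = x) :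
    ∃ a : A, x = fun _ => a := by
  refine ⟨x 1, funext fun k => ?_⟩
  have := congrFun (h k⁻¹) 1
  simpa [shift] using this

/-- A local rule forces equivariance. -/
lemma equivariant_of_local {τ : (G → A) → (G → A)} {S : Set G} {μ : (S → A) → A}
    (hμ : ∀ (x : G → A) (g : G), τ x g = μ (fun s => x (s.val * g))) :
    equivariant τ := by
  intro x g
  funext h
  show τ (shift x g) h = τ x (h * g⁻¹)
  rw [hμ, hμ]
  congr 1
  funext s
  show x (s.val * h * g⁻¹) = x (s.val * (h * g⁻¹))
  rw [mul_assoc]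

/-- Splitting a subtype count along a second predicate. -/
lemma card_subtype_split {α : Type*} [Fintype α] (p q : α → Prop) :
    Fintype.card {x // p x ∧ q x} + Fintype.card {x // p x ∧ ¬ q x}
      = Fintype.card {x // p x} := by
  classical
  rw [← Fintype.card_sum]
  refine Fintype.card_congr ?_
  exact (Equiv.sumCongr (Equiv.subtypeSubtypeEquivSubtypeInter p q).symm
    (Equiv.subtypeSubtypeEquivSubtypeInter p (fun x => ¬ q x)).symm).trans
    (Equiv.sumCompl (fun y : {x // p x} => q y.1))

/-- Auxiliary equivalence: pulling a predicate on the first factor out of a product. -/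
def prodSubtypeFstEquiv {γ δ : Type*} (R : γ → Prop) :
    {y : γ × δ // R y.1} ≃ {c : γ // R c} × δ where
  toFun y := (⟨y.1.1, y.2⟩, y.1.2)
  invFun z := ⟨(z.1.1, z.2), z.1.2⟩
  left_inv y := rfl
  right_inv z := rfl

/-- Counting configurations whose restriction to a subset satisfies a predicate. -/
lemma card_restrict {α β : Type*} [Fintype α] [Fintype β] (p : α → Prop)
    (R : ({a // p a} → β) → Prop) :
    Fintype.card {x : α → β // R (fun s => x s.val)}
      = Fintype.card {f : {a // p a} → β // R f} * Fintype.card ({a // ¬ p a} → β) := by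
  classical
  rw [← Fintype.card_prod]
  refine Fintype.card_congr ?_
  refine Equiv.trans ?_ (prodSubtypeFstEquiv (δ := {a // ¬ p a} → β) R)
  exact (Equiv.piEquivPiSubtypeProd p (fun _ => β)).subtypeEquiv (fun x => Iff.rfl)

/-- **Core lemma**: a cellular automaton with a proper memory set whose nontrivial
fibers consist only of constant configurations must be injective. -/
lemma fullmem_core [Fintype G] [Fintype A]
    (hn : 2 ≤ Fintype.card G) (hq : 2 ≤ Fintype.card A)
    (τ : (G → A) → (G → A)) (S : Set G) (hS : S ≠ Set.univ)
    (μ : (S → A) → A) (hμ : ∀ (x : G → A) (g : G), τ x g = μ (fun s => x (s.val * g)))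
    (hker : ∀ x y : G → A, τ x = τ y → x ≠ y →
      (∃ a, x = fun _ => a) ∧ (∃ a, y = fun _ => a))
    (hni : ¬ Function.Injective τ) : False := by
  classical
  have hEq : equivariant τ := equivariant_of_local hμ
  -- the induced map on constants
  set t : A → A := fun a => τ (fun _ => a) 1 with ht
  have hca : ∀ a : A, τ (fun _ => a) = fun _ => t a := by
    intro a
    funext g
    show τ (fun _ => a) g = τ (fun _ => a) 1
    rw [hμ, hμ]
  -- nonconstant configurations map to nonconstant configurations
  have hnc : ∀ x : G → A, ¬ (∃ a, x = fun _ => a) → ¬ (∃ a, τ x = fun _ => a) := by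
    rintro x hx ⟨c, hc⟩
    have hng : ¬ ∀ g, shift x g = x := fun hall => hx (isConst_of_shift_fixed x hall)
    push_neg at hng
    obtain ⟨g, hg⟩ := hng
    have h1 : τ (shift x g) = τ x := by
      rw [hEq, hc]
      rfl
    exact hx (hker _ _ h1 hg).2
  -- the map t is surjective
  have hts : Function.Surjective t := by
    intro v
    by_contra hv
    push_neg at hv
    -- every configuration mapping to value v at 1 is nonconstant
    have hvnc : ∀ x : G → A, τ x 1 = v → ¬ (∃ a, x = fun _ => a) := by
      rintro x hx ⟨a, rfl⟩
      exact hv a hx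
    -- Count 1 : q divides the number of x with τ x 1 = v
    have key1 : Fintype.card A ∣ Fintype.card {x : G → A // τ x 1 = v} := by
      have hrw : ∀ x : G → A, (τ x 1 = v) ↔ (μ (fun s : S => x s.val) = v) := by
        intro x
        have hx1 : (fun s : S => x (s.val * (1:G))) = (fun s : S => x s.val) :=
          funext fun s => by rw [mul_one]
        rw [hμ, hx1]
      rw [Fintype.card_congr (Equiv.subtypeEquivRight hrw)]
      rw [card_restrict (fun g => g ∈ S) (fun f => μ f = v)]
      apply dvd_mul_of_dvd_right
      rw [Fintype.card_fun]
      apply dvd_pow_self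
      obtain ⟨g₀, hg₀⟩ := Set.ne_univ_iff_exists_notMem S |>.mp hS
      have : 0 < Fintype.card {a : G // a ∉ S} := Fintype.card_pos_iff.mpr ⟨⟨g₀, hg₀⟩⟩
      omega
    -- Count 2 : q divides the number of y with y 1 = v
    have key2 : Fintype.card A ∣ Fintype.card {y : G → A // y 1 = v} := by
      have hrw : ∀ y : G → A, (y 1 = v) ↔
          ((fun s : {g : G // g = 1} => y s.val) ⟨1, rfl⟩ = v) := fun y => Iff.rfl
      rw [Fintype.card_congr (Equiv.subtypeEquivRight hrw)]
      rw [card_restrict (fun g : G => g = 1) (fun f => f ⟨1, rfl⟩ = v)]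
      apply dvd_mul_of_dvd_right
      rw [Fintype.card_fun]
      apply dvd_pow_self
      obtain ⟨g₁, hg₁⟩ := Fintype.exists_ne_of_one_lt_card (by omega) (1 : G)
      have : 0 < Fintype.card {a : G // ¬ a = 1} := Fintype.card_pos_iff.mpr ⟨⟨g₁, hg₁⟩⟩
      omega
    -- there is exactly one constant configuration with value v at 1
    have hconst1 : Fintype.card {y : G → A // y 1 = v ∧ ∃ a, y = fun _ => a} = 1 := by
      rw [Fintype.card_eq_one_iff]
      refine ⟨⟨fun _ => v, rfl, ⟨v, rfl⟩⟩, ?_⟩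
      rintro ⟨y, h1, ⟨a, rfl⟩⟩
      have : a = v := h1
      subst this
      rfl
    -- τ restricts to a bijection of nonconstant configurations
    set NC := {x : G → A // ¬ ∃ a, x = fun _ => a} with hNC
    have hF : ∀ z : NC, ¬ ∃ a, τ z.1 = fun _ => a := fun z => hnc z.1 z.2
    set F : NC → NC := fun z => ⟨τ z.1, hF z⟩ with hFdef
    have hFinj : Function.Injective F := by
      intro z w h
      have h' : τ z.1 = τ w.1 := congrArg Subtype.val h
      by_contra hzw
      have hne : z.1 ≠ w.1 := fun h'' => hzw (Subtype.ext h'')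
      exact z.2 (hker _ _ h' hne).1
    have hFbij : Function.Bijective F := Finite.injective_iff_bijective.mp hFinj
    set Fe : NC ≃ NC := Equiv.ofBijective F hFbij with hFe
    -- Count 3 : the two counted sets above are related
    have key3 : Fintype.card {x : G → A // τ x 1 = v}
        = Fintype.card {y : G → A // y 1 = v ∧ ¬ ∃ a, y = fun _ => a} := by
      have e1 : {x : G → A // τ x 1 = v}
          ≃ {x : G → A // (¬ ∃ a, x = fun _ => a) ∧ τ x 1 = v} :=
        Equiv.subtypeEquivRight (fun x =>
          ⟨fun h => ⟨hvnc x h, h⟩, fun h => h.2⟩)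
      have e2 : {x : G → A // (¬ ∃ a, x = fun _ => a) ∧ τ x 1 = v}
          ≃ {z : NC // τ z.1 1 = v} :=
        (Equiv.subtypeSubtypeEquivSubtypeInter
          (fun x : G → A => ¬ ∃ a, x = fun _ => a) (fun x => τ x 1 = v)).symm
      have e3 : {z : NC // τ z.1 1 = v} ≃ {w : NC // w.1 1 = v} :=
        Fe.subtypeEquiv (fun z => Iff.rfl)
      have e4 : {w : NC // w.1 1 = v}
          ≃ {y : G → A // (¬ ∃ a, y = fun _ => a) ∧ y 1 = v} :=
        Equiv.subtypeSubtypeEquivSubtypeInter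
          (fun x : G → A => ¬ ∃ a, x = fun _ => a) (fun x => x 1 = v)
      have e5 : {y : G → A // (¬ ∃ a, y = fun _ => a) ∧ y 1 = v}
          ≃ {y : G → A // y 1 = v ∧ ¬ ∃ a, y = fun _ => a} :=
        Equiv.subtypeEquivRight (fun y => and_comm)
      exact Fintype.card_congr ((((e1.trans e2).trans e3).trans e4).trans e5)
    have hsplit' : Fintype.card {y : G → A // y 1 = v ∧ ∃ a, y = fun _ => a}
        + Fintype.card {y : G → A // y 1 = v ∧ ¬ ∃ a, y = fun _ => a}
        = Fintype.card {y : G → A // y 1 = v} := by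
      rw [← Fintype.card_sum]
      exact Fintype.card_congr ((Equiv.sumCongr
        (Equiv.subtypeSubtypeEquivSubtypeInter (fun y : G → A => y 1 = v)
          (fun y : G → A => ∃ a, y = fun _ => a)).symm
        (Equiv.subtypeSubtypeEquivSubtypeInter (fun y : G → A => y 1 = v)
          (fun y : G → A => ¬ ∃ a, y = fun _ => a)).symm).trans
        (Equiv.sumCompl (fun y : {x : G → A // x 1 = v} => ∃ a, y.1 = fun _ => a)))
    rw [hconst1] at hsplit'
    -- q ∣ N and q ∣ N + 1, contradiction
    rw [key3] at key1
    have key2' : Fintype.card A ∣ 1 + Fintype.card {y : G → A // y 1 = v ∧ ¬ ∃ a, y = fun _ => a} := by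
      rwa [hsplit']
    have hdvd1 : Fintype.card A ∣ 1 := by
      have := Nat.dvd_sub key2' key1
      simpa using this
    have h1' : Fintype.card A = 1 := Nat.dvd_one.mp hdvd1
    rw [h1'] at hq
    exact absurd hq (by decide)
  have hti : Function.Injective t := Finite.injective_iff_surjective.mpr hts
  -- contradiction with non-injectivity
  rw [Function.not_injective_iff] at hni
  obtain ⟨x, y, hxy, hne⟩ := hni
  obtain ⟨⟨a, rfl⟩, ⟨b, rfl⟩⟩ := hker x y hxy hne
  have hab : a ≠ b := fun h => hne (by rw [h])
  have : t a = t b := by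
    have := congrFun hxy 1
    simpa [ht] using this
  exact hab (hti this)

end FullMemoryHelpers

/-- minimal memory set of generators: if a set `T` of
`G`-equivariant transformations generates, under composition, the monoid of all
`G`-equivariant transformations of `A^G`, then some `τ ∈ T` admits no proper subset
of `G` as a memory set. -/
theorem generating_set_full_memory [Group G] [Fintype G] [Fintype A]
    (hn : 2 ≤ Fintype.card G) (hq : 2 ≤ Fintype.card A)
    (T : Set (Function.End (G → A)))
    (hT : ∀ τ ∈ T, equivariant τ)
    (hgen : ∀ σ : Function.End (G → A), equivariant σ → σ ∈ Submonoid.closure T) :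
    ∃ τ ∈ T, ∀ S : Set G, admitsMemorySet τ S → S = Set.univ := by
  classical
  by_contra hcon
  push_neg at hcon
  -- every element of T has a proper memory set
  obtain ⟨a₀, a₁, ha⟩ := Fintype.exists_pair_of_one_lt_card (by omega : 1 < Fintype.card A)
  -- the witness transformation: collapse all constants, identity elsewhere
  set σ : Function.End (G → A) :=
    fun x => if ∃ a : A, x = fun _ => a then (fun _ => a₀) else x with hσdef
  have hshiftC : ∀ (x : G → A) (g : G),
      (∃ a : A, shift x g = fun _ => a) ↔ (∃ a : A, x = fun _ => a) := by
    intro x g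
    constructor
    · rintro ⟨a, ha'⟩
      refine ⟨a, ?_⟩
      have : shift (shift x g) g⁻¹ = x := by
        rw [shift_shift_mul, mul_inv_cancel, shift_one']
      rw [← this, ha']
      rfl
    · rintro ⟨a, rfl⟩
      exact ⟨a, rfl⟩
  have hσeq : equivariant σ := by
    intro x g
    by_cases hx : ∃ a : A, x = fun _ => a
    · have hx' := (hshiftC x g).mpr hx
      show σ (shift x g) = shift (σ x) g
      rw [hσdef]
      simp only [if_pos hx, if_pos hx']
      rfl
    · have hx' : ¬ ∃ a : A, shift x g = fun _ => a := fun h => hx ((hshiftC x g).mp h)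
      show σ (shift x g) = shift (σ x) g
      rw [hσdef]
      simp only [if_neg hx, if_neg hx']
  obtain ⟨l, hlT, hlprod⟩ := Submonoid.exists_list_of_mem_closure (hgen σ hσeq)
  -- main induction on the list of generators
  have main : ∀ l : List (Function.End (G → A)), (∀ f ∈ l, f ∈ T) →
      equivariant l.prod ∧
      ((∀ x y : G → A, l.prod x = l.prod y → x ≠ y →
          (∃ a, x = fun _ => a) ∧ (∃ a, y = fun _ => a)) →
        Function.Injective l.prod) := by
    intro l
    induction l with
    | nil =>
      intro _
      constructor
      · intro x g
        show shift x g = shift x g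
        rfl
      · intro _
        intro x y h
        exact h
    | cons τ l' ih =>
      intro hmem
      have hτT : τ ∈ T := hmem τ List.mem_cons_self
      obtain ⟨ihEq, ihQ⟩ := ih (fun f hf => hmem f (List.mem_cons_of_mem _ hf))
      have hτeq : equivariant τ := hT τ hτT
      rw [List.prod_cons]
      set ρ : Function.End (G → A) := l'.prod with hρdef
      have hmul : ∀ x : G → A, (τ * ρ) x = τ (ρ x) := fun _ => rfl
      constructor
      · intro x g
        show τ (ρ (shift x g)) = shift (τ (ρ x)) g
        rw [ihEq x g, hτeq (ρ x) g]
      · intro hfib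
        -- the tail is injective
        have hρfib : ∀ x y : G → A, ρ x = ρ y → x ≠ y →
            (∃ a, x = fun _ => a) ∧ (∃ a, y = fun _ => a) := by
          intro x y h hne
          exact hfib x y (by show τ (ρ x) = τ (ρ y); rw [h]) hne
        have hρinj : Function.Injective ρ := ihQ hρfib
        have hρbij : Function.Bijective ρ := Finite.injective_iff_bijective.mp hρinj
        have hρconst : ∀ a : A, ∃ b : A, ρ (fun _ => a) = fun _ => b := by
          intro a
          apply isConst_of_shift_fixed
          intro g
          rw [← ihEq]
          rfl
        by_contra hninj
        -- extract a proper memory set for τ and contradict the core lemma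
        obtain ⟨S, hadm, hSne⟩ := hcon τ hτT
        obtain ⟨μ, hμ⟩ := hadm
        refine fullmem_core hn hq τ S hSne μ hμ ?_ ?_
        · intro w w' hww hne
          obtain ⟨x, rfl⟩ := hρbij.2 w
          obtain ⟨y, rfl⟩ := hρbij.2 w'
          have hne' : x ≠ y := fun h => hne (by rw [h])
          have hww' : (τ * ρ) x = (τ * ρ) y := hww
          have hpair := hfib x y hww' hne'
          obtain ⟨⟨a, hxa⟩, ⟨b, hyb⟩⟩ := hpair
          rw [hxa, hyb]
          exact ⟨hρconst a, hρconst b⟩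
        · intro hτinj
          exact hninj (fun x y h => hρinj (hτinj h))
  obtain ⟨_, hQ⟩ := main l hlT
  rw [hlprod] at hQ
  -- σ has all nontrivial fibers among constants
  have hfibσ : ∀ x y : G → A, σ x = σ y → x ≠ y →
      (∃ a, x = fun _ => a) ∧ (∃ a, y = fun _ => a) := by
    intro x y hxy hne
    by_cases hx : ∃ a : A, x = fun _ => a <;> by_cases hy : ∃ a : A, y = fun _ => a
    · exact ⟨hx, hy⟩
    · exfalso
      rw [hσdef] at hxy
      simp only [if_pos hx, if_neg hy] at hxy
      exact hy ⟨a₀, hxy.symm⟩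
    · exfalso
      rw [hσdef] at hxy
      simp only [if_neg hx, if_pos hy] at hxy
      exact hx ⟨a₀, hxy⟩
    · exfalso
      rw [hσdef] at hxy
      simp only [if_neg hx, if_neg hy] at hxy
      exact hne hxy
  have hinj := hQ hfibσ
  have h1 : σ (fun _ => a₀) = σ (fun _ => a₁) := by
    have e0 : ∃ a : A, (fun _ : G => a₀) = fun _ => a := ⟨a₀, rfl⟩
    have e1 : ∃ a : A, (fun _ : G => a₁) = fun _ => a := ⟨a₁, rfl⟩
    show (if ∃ a : A, (fun _ : G => a₀) = fun _ => a then (fun _ : G => a₀) else fun _ => a₀)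
      = (if ∃ a : A, (fun _ : G => a₁) = fun _ => a then (fun _ : G => a₀) else fun _ => a₁)
    rw [if_pos e0, if_pos e1]
  exact ha (congrFun (hinj h1) 1)
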